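/- Let M > 0, Q ≠ 0 and μ := 8Q²/(9M²), and assume μ < 1. Then both functions s ↦ Λ₋(s) and s ↦ Λ₊(s) are strictly decreasing on the interval (μ, 1]: for μ < s₁ < s₂ ≤ 1 one has Λ₋(s₁) > Λ₋(s₂) and Λ₊(s₁) > Λ₊(s₂). -/

import Mathlib

noncomputable section

/-- `Λ₋`, defined for `β := 9sM² − 8Q² ≥ 0`. -/
def Λminus (M Q s : ℝ) : ℝ :=
  1 / (32 * s ^ 2 * Q ^ 6) *
    (8 * Q ^ 4 - (9 * s * M ^ 2 - 8 * Q ^ 2) * (9 * s * M ^ 2 - 8 * Q ^ 2 + 4 * Q ^ 2)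
      - 3 * Real.sqrt (s * M ^ 2 * (9 * s * M ^ 2 - 8 * Q ^ 2) ^ 3))

/-- `Λ₊`, defined for `β := 9sM² − 8Q² ≥ 0`. -/
def Λplus (M Q s : ℝ) : ℝ :=
  1 / (32 * s ^ 2 * Q ^ 6) *
    (8 * Q ^ 4 - (9 * s * M ^ 2 - 8 * Q ^ 2) * (9 * s * M ^ 2 - 8 * Q ^ 2 + 4 * Q ^ 2)
      + 3 * Real.sqrt (s * M ^ 2 * (9 * s * M ^ 2 - 8 * Q ^ 2) ^ 3))

lemma arg_nonneg (M Q s : ℝ) (hM : 0 < M) (hQ : Q ≠ 0)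
    (hs : 8 * Q ^ 2 / (9 * M ^ 2) < s) :
    0 ≤ 1 - 8 * Q ^ 2 / (9 * M ^ 2 * s) := by
  have hM2 : (0:ℝ) < 9 * M ^ 2 := by positivity
  have hμpos : 0 < 8 * Q ^ 2 / (9 * M ^ 2) := by positivity
  have hs0 : 0 < s := lt_trans hμpos hs
  rw [sub_nonneg, div_le_one (by positivity)]
  have := (div_lt_iff₀ hM2).mp hs
  nlinarith

lemma key_rel (M Q s : ℝ) (hM : 0 < M) (hQ : Q ≠ 0)
    (hs : 8 * Q ^ 2 / (9 * M ^ 2) < s) :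
    9 * s * M ^ 2 * (1 - (Real.sqrt (1 - 8 * Q ^ 2 / (9 * M ^ 2 * s))) ^ 2) = 8 * Q ^ 2 := by
  have hM2 : (0:ℝ) < 9 * M ^ 2 := by positivity
  have hμpos : 0 < 8 * Q ^ 2 / (9 * M ^ 2) := by positivity
  have hs0 : 0 < s := lt_trans hμpos hs
  have harg := arg_nonneg M Q s hM hQ hs
  rw [Real.sq_sqrt harg]
  field_simp
  ring

lemma sqrt_term (M Q s : ℝ) (hM : 0 < M) (hQ : Q ≠ 0)
    (hs : 8 * Q ^ 2 / (9 * M ^ 2) < s) :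
    Real.sqrt (s * M ^ 2 * (9 * s * M ^ 2 - 8 * Q ^ 2) ^ 3)
      = 27 * s ^ 2 * M ^ 4 * (Real.sqrt (1 - 8 * Q ^ 2 / (9 * M ^ 2 * s))) ^ 3 := by
  set v := Real.sqrt (1 - 8 * Q ^ 2 / (9 * M ^ 2 * s)) with hv
  have key := key_rel M Q s hM hQ hs
  have hs0 : 0 < s := lt_trans (by positivity) hs
  have hvnn : 0 ≤ v := Real.sqrt_nonneg _
  have hb : 9 * s * M ^ 2 - 8 * Q ^ 2 = 9 * s * M ^ 2 * v ^ 2 := by linear_combination key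
  rw [hb]
  have : s * M ^ 2 * (9 * s * M ^ 2 * v ^ 2) ^ 3 = (27 * s ^ 2 * M ^ 4 * v ^ 3) ^ 2 := by ring
  rw [this, Real.sqrt_sq (by positivity)]

lemma closed_minus (M Q s : ℝ) (hM : 0 < M) (hQ : Q ≠ 0)
    (hs : 8 * Q ^ 2 / (9 * M ^ 2) < s) :
    Λminus M Q s = 81 * M ^ 4 / (256 * Q ^ 6) *
      ((1 - 3 * Real.sqrt (1 - 8 * Q ^ 2 / (9 * M ^ 2 * s)))
        * (1 + Real.sqrt (1 - 8 * Q ^ 2 / (9 * M ^ 2 * s))) ^ 3) := by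
  have key := key_rel M Q s hM hQ hs
  have hs0 : 0 < s := lt_trans (by positivity) hs
  rw [Λminus, sqrt_term M Q s hM hQ hs]
  set v := Real.sqrt (1 - 8 * Q ^ 2 / (9 * M ^ 2 * s)) with hv
  have hsne : s ≠ 0 := ne_of_gt hs0
  field_simp
  linear_combination (32 * s ^ 2 * (24 * Q ^ 2 - 9 * s * M ^ 2 * (9 + 3 * v ^ 2)) + 96 * (s ^ 2 - Q ^ 6) * ((27 + 9 * v ^ 2) * s * M ^ 2 - 8 * Q ^ 2) + 96 * (1 - Q ^ 6) * (8 * Q ^ 2 - 9 * s * M ^ 2 * (3 + v ^ 2))) * key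

lemma closed_plus (M Q s : ℝ) (hM : 0 < M) (hQ : Q ≠ 0)
    (hs : 8 * Q ^ 2 / (9 * M ^ 2) < s) :
    Λplus M Q s = 81 * M ^ 4 / (256 * Q ^ 6) *
      ((1 + 3 * Real.sqrt (1 - 8 * Q ^ 2 / (9 * M ^ 2 * s)))
        * (1 - Real.sqrt (1 - 8 * Q ^ 2 / (9 * M ^ 2 * s))) ^ 3) := by
  have key := key_rel M Q s hM hQ hs
  have hs0 : 0 < s := lt_trans (by positivity) hs
  rw [Λplus, sqrt_term M Q s hM hQ hs]
  set v := Real.sqrt (1 - 8 * Q ^ 2 / (9 * M ^ 2 * s)) with hv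
  have hsne : s ≠ 0 := ne_of_gt hs0
  field_simp
  linear_combination (32 * s ^ 2 * (24 * Q ^ 2 - 9 * s * M ^ 2 * (9 + 3 * v ^ 2)) + 96 * (s ^ 2 - Q ^ 6) * ((27 + 9 * v ^ 2) * s * M ^ 2 - 8 * Q ^ 2) + 96 * (1 - Q ^ 6) * (8 * Q ^ 2 - 9 * s * M ^ 2 * (3 + v ^ 2))) * key

lemma fminus_lt {a b : ℝ} (ha : 0 ≤ a) (hab : a < b) :
    (1-3*b)*(1+b)^3 < (1-3*a)*(1+a)^3 := by
  nlinarith [mul_pos (sub_pos.2 hab) (show (0:ℝ) < a + b by linarith), sq_nonneg (a+b),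
    sq_nonneg (a-b), mul_nonneg ha (le_trans ha hab.le),
    mul_nonneg (mul_nonneg ha ha) ha, sq_nonneg a, sq_nonneg b]

lemma fplus_lt {a b : ℝ} (ha : 0 ≤ a) (hab : a < b) (hb : b < 1) :
    (1+3*b)*(1-b)^3 < (1+3*a)*(1-a)^3 := by
  have hb0 : 0 < b := lt_of_le_of_lt ha hab
  have ha1 : a < 1 := lt_trans hab hb
  have hh : 0 < 6*(a+b) - 8*(a^2+a*b+b^2) + 3*(a^3+a^2*b+a*b^2+b^3) := by
    rcases le_or_gt (3*(a+b)) 4 with hp | hp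
    · nlinarith [mul_pos hb0 (mul_pos (sub_pos.2 hb) (sub_pos.2 hb)),
        mul_nonneg (mul_nonneg ha (sub_nonneg.2 ha1.le)) (sub_nonneg.2 ha1.le),
        mul_nonneg (by linarith : (0:ℝ) ≤ a+b) (sq_nonneg (a+b-2)),
        mul_nonneg (sq_nonneg (a-b)) (by linarith : (0:ℝ) ≤ 4 - 3*(a+b))]
    · nlinarith [mul_pos hb0 (mul_pos (sub_pos.2 hb) (sub_pos.2 hb)),
        mul_nonneg (mul_nonneg ha (sub_nonneg.2 ha1.le)) (sub_nonneg.2 ha1.le),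
        sq_nonneg (a+b-2),
        mul_nonneg (mul_nonneg (sub_nonneg.2 ha1.le) (sub_nonneg.2 hb.le)) (by linarith : (0:ℝ) ≤ 3*(a+b) - 4)]
  nlinarith [mul_pos (sub_pos.2 hab) hh]

/-- For `μ = 8Q²/(9M²) < 1`, both `s ↦ Λ₋(s)` and `s ↦ Λ₊(s)` are strictly decreasing
on `(μ, 1]`. -/
theorem Lambda_pm_strictly_decreasing (M Q μ : ℝ)
    (hM : 0 < M) (hQ : Q ≠ 0) (hμ : μ = 8 * Q ^ 2 / (9 * M ^ 2)) (hμ1 : μ < 1) :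
    ∀ s₁ s₂ : ℝ, μ < s₁ → s₁ < s₂ → s₂ ≤ 1 →
      Λminus M Q s₂ < Λminus M Q s₁ ∧ Λplus M Q s₂ < Λplus M Q s₁ := by
  intro s₁ s₂ h1 h12 h21
  have hμ1' : 8 * Q ^ 2 / (9 * M ^ 2) < s₁ := hμ ▸ h1
  have hμ2' : 8 * Q ^ 2 / (9 * M ^ 2) < s₂ := lt_trans hμ1' h12
  have hμpos : 0 < 8 * Q ^ 2 / (9 * M ^ 2) := by positivity
  have hs1 : 0 < s₁ := lt_trans hμpos hμ1'
  have hs2 : 0 < s₂ := lt_trans hs1 h12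
  rw [closed_minus M Q s₁ hM hQ hμ1', closed_minus M Q s₂ hM hQ hμ2',
    closed_plus M Q s₁ hM hQ hμ1', closed_plus M Q s₂ hM hQ hμ2']
  set v₁ := Real.sqrt (1 - 8 * Q ^ 2 / (9 * M ^ 2 * s₁)) with hv1
  set v₂ := Real.sqrt (1 - 8 * Q ^ 2 / (9 * M ^ 2 * s₂)) with hv2
  have hv1nn : 0 ≤ v₁ := Real.sqrt_nonneg _
  have hv2nn : 0 ≤ v₂ := Real.sqrt_nonneg _
  have hlt : v₁ < v₂ := by
    apply Real.sqrt_lt_sqrt (arg_nonneg M Q s₁ hM hQ hμ1')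
    have h9 : (0:ℝ) < 9 * M ^ 2 := by positivity
    have : 8 * Q ^ 2 / (9 * M ^ 2 * s₂) < 8 * Q ^ 2 / (9 * M ^ 2 * s₁) := by
      apply div_lt_div_of_pos_left (by positivity) (by positivity)
      nlinarith
    linarith
  have hv2lt1 : v₂ < 1 := by
    have h2 : v₂ ^ 2 < 1 := by
      rw [hv2, Real.sq_sqrt (arg_nonneg M Q s₂ hM hQ hμ2')]
      have : 0 < 8 * Q ^ 2 / (9 * M ^ 2 * s₂) := by positivity
      linarith
    nlinarith
  have hC : 0 < 81 * M ^ 4 / (256 * Q ^ 6) := by positivity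
  exact ⟨mul_lt_mul_of_pos_left (fminus_lt hv1nn hlt) hC,
    mul_lt_mul_of_pos_left (fplus_lt hv1nn hlt hv2lt1) hC⟩
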